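/- Write Ω(x) = {u | Hu ≤ h, F(Ax + Bu) ≤ g} with g having nonzero entries, and suppose Kx ∈ Ω(x) for all x ∈ S. If x ∈ int(S) and some constraint is active at u* = Kx, i.e., Fᵢᵀ(A + BK)x = gᵢ for some i, then there exists y ∈ int(S) with Ky ∉ Ω(y), contradicting safety of the linear policy. Hence no constraint of the form Fᵢᵀ(Ax+Bu) ≤ gᵢ is active at Kx for x ∈ int(S). -/
import Mathlib


open Matrix

/-- With `Ω(x) = {u | Hu ≤ h, F(Ax+Bu) ≤ g}` (entries of `g` nonzero), a safe linear
policy `Kx ∈ Ω(x)` for all `x ∈ S`, and `x ∈ int S`: no constraint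
`Fᵢᵀ(Ax + Bu) ≤ gᵢ` is active at `u = Kx`, for otherwise some `y ∈ int S` would
satisfy `Ky ∉ Ω(y)`, contradicting safety. -/
theorem no_active_constraint_at_interior
    (n m q r rs : ℕ)
    (A : Matrix (Fin n) (Fin n) ℝ) (B : Matrix (Fin n) (Fin m) ℝ)
    (K : Matrix (Fin m) (Fin n) ℝ)
    (H : Fin q → (Fin m → ℝ)) (h : Fin q → ℝ)
    (F : Fin r → (Fin n → ℝ)) (g : Fin r → ℝ)
    (Vs : Matrix (Fin rs) (Fin n) ℝ) (sbar : Fin rs → ℝ)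
    (S : Set (Fin n → ℝ))
    (hS : S = {x | ∀ i, -sbar i ≤ (Vs *ᵥ x) i ∧ (Vs *ᵥ x) i ≤ sbar i})
    (Ω : (Fin n → ℝ) → Set (Fin m → ℝ))
    (hΩ : ∀ x, Ω x = {u | (∀ j, H j ⬝ᵥ u ≤ h j) ∧ ∀ i, F i ⬝ᵥ (A *ᵥ x + B *ᵥ u) ≤ g i})
    (hg : ∀ i, g i ≠ 0)
    (hsafe : ∀ x ∈ S, K *ᵥ x ∈ Ω x)
    (x : Fin n → ℝ) (hx : x ∈ interior S) :
    ∀ i, F i ⬝ᵥ (A *ᵥ x + B *ᵥ (K *ᵥ x)) ≠ g i := by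
  intro i heq
  -- key scaling bound
  have key : ∀ t : ℝ, t • x ∈ S → t * g i ≤ g i := by
    intro t ht
    have := ((hΩ (t • x)) ▸ hsafe (t • x) ht).2 i
    have hval : F i ⬝ᵥ (A *ᵥ (t • x) + B *ᵥ (K *ᵥ (t • x)))
        = t * (F i ⬝ᵥ (A *ᵥ x + B *ᵥ (K *ᵥ x))) := by
      rw [mulVec_smul, mulVec_smul, mulVec_smul, ← smul_add, dotProduct_smul,
        smul_eq_mul]
    rw [hval, heq] at this
    exact this
  -- continuity: scalings near 1 stay in S
  have hcont : Continuous (fun t : ℝ => t • x) := by continuity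
  have hopen : IsOpen ((fun t : ℝ => t • x) ⁻¹' interior S) :=
    isOpen_interior.preimage hcont
  have h1 : (1 : ℝ) ∈ (fun t : ℝ => t • x) ⁻¹' interior S := by
    simp [Set.mem_preimage, one_smul]; exact hx
  obtain ⟨ε, hε, hball⟩ := Metric.isOpen_iff.1 hopen 1 h1
  have hmem : ∀ t : ℝ, |t - 1| < ε → t • x ∈ S := by
    intro t ht
    have : t ∈ Metric.ball (1 : ℝ) ε := by
      simpa [Real.dist_eq] using ht
    exact interior_subset (hball this)
  rcases lt_or_gt_of_ne (hg i) with hneg | hpos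
  · -- g i < 0 : take t = 1 - ε/2 < 1
    have hS' := key (1 - ε / 2) (hmem _ (by rw [abs_of_nonpos (by linarith)]; linarith))
    nlinarith
  · -- g i > 0 : take t = 1 + ε/2 > 1
    have hS' := key (1 + ε / 2) (hmem _ (by rw [abs_of_nonneg (by linarith)]; linarith))
    nlinarith
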